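/- Let f : ℝ → ℝ be real analytic with f(0) = 0 and f'(0) = -1, and suppose f(f(x)) - x = c·x^{2m+1} + O(x^{2m+2}) near 0 with c < 0. Then the origin is a locally asymptotically stable fixed point of f. -/

import Mathlib

open Topology Filter Asymptotics

/-- Key estimate lemma: under the expansion estimate, on the positive side `g` maps
`(0, δ)` into itself moving points strictly toward 0. -/
lemma auxA (g : ℝ → ℝ) (c K δ : ℝ) (m : ℕ) (hc : c < 0) (hm : 1 ≤ m)
    (hδ1 : δ ≤ 1) (hδ2 : (|K| + 1) * δ ≤ -c / 2) (hδ3 : (-c) * δ ≤ 1 / 2)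
    (hest : ∀ x, 0 < x → x < δ → |g x - x - c * x ^ (2 * m + 1)| ≤ K * x ^ (2 * m + 2)) :
    ∀ x, 0 < x → x < δ → 0 < g x ∧ g x < x := by
  intro x hx hxδ
  have h := hest x hx hxδ
  rw [abs_le] at h
  have hp1 : 0 < x ^ (2 * m + 1) := pow_pos hx _
  have hxm : x ^ (2 * m) ≤ x := pow_le_of_le_one hx.le (le_trans hxδ.le hδ1) (by omega)
  have hK : K * x ≤ -c / 2 := by
    have h1 : K ≤ |K| := le_abs_self K
    nlinarith [abs_nonneg K]
  have hA : K * x ^ (2 * m + 2) ≤ (-c / 2) * x ^ (2 * m + 1) := by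
    calc K * x ^ (2 * m + 2) = (K * x) * x ^ (2 * m + 1) := by ring
      _ ≤ (-c / 2) * x ^ (2 * m + 1) := mul_le_mul_of_nonneg_right hK hp1.le
  have hB : (-c) * x ≤ 1 / 2 :=
    le_trans (mul_le_mul_of_nonneg_left hxδ.le (by linarith)) hδ3
  have hC : x ^ (2 * m + 1) ≤ x * x := by
    calc x ^ (2 * m + 1) = x ^ (2 * m) * x := by ring
      _ ≤ x * x := mul_le_mul_of_nonneg_right hxm hx.le
  constructor
  · -- 0 < g x
    have l2 : (3 * c / 2) * (x * x) ≤ (3 * c / 2) * x ^ (2 * m + 1) :=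
      mul_le_mul_of_nonpos_left hC (by linarith)
    have l3 : (3 / 2) * x * ((-c) * x) ≤ (3 / 2) * x * (1 / 2) :=
      mul_le_mul_of_nonneg_left hB (by positivity)
    nlinarith [h.1]
  · have hneg : c / 2 * x ^ (2 * m + 1) < 0 :=
      mul_neg_of_neg_of_pos (by linarith) hp1
    nlinarith [h.2]

/-- If `g` is continuous on `[0, b)`, and maps `(0, b)` strictly toward 0 staying positive,
then iterates from `(0, b)` tend to 0. -/
lemma auxB (g : ℝ → ℝ) (b : ℝ)
    (hcont : ∀ y, 0 ≤ y → y < b → ContinuousAt g y)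
    (hg : ∀ y, 0 < y → y < b → 0 < g y ∧ g y < y)
    (x : ℝ) (hx0 : 0 < x) (hxb : x < b) :
    Tendsto (fun n => g^[n] x) atTop (𝓝 0) := by
  set u : ℕ → ℝ := fun n => g^[n] x with hu
  have key : ∀ n, 0 < u n ∧ u n ≤ x := by
    intro n
    induction n with
    | zero => exact ⟨hx0, le_refl x⟩
    | succ n ih =>
      have h1 := hg (u n) ih.1 (lt_of_le_of_lt ih.2 hxb)
      have e : u (n + 1) = g (u n) := Function.iterate_succ_apply' g n x
      exact ⟨e ▸ h1.1, e ▸ le_trans h1.2.le ih.2⟩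
  have anti : Antitone u := by
    apply antitone_nat_of_succ_le
    intro n
    have h1 := hg (u n) (key n).1 (lt_of_le_of_lt (key n).2 hxb)
    have e : u (n + 1) = g (u n) := Function.iterate_succ_apply' g n x
    rw [e]; exact h1.2.le
  have hbdd : BddBelow (Set.range u) := by
    refine ⟨0, ?_⟩
    rintro y ⟨n, rfl⟩
    exact (key n).1.le
  have hlim := tendsto_atTop_ciInf anti hbdd
  set L := ⨅ n, u n with hL
  have hL0 : 0 ≤ L := le_ciInf fun n => (key n).1.le
  have hLx : L ≤ x := by
    have := ciInf_le hbdd 0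
    simpa [hu] using this
  have hLb : L < b := lt_of_le_of_lt hLx hxb
  have hgc := hcont L hL0 hLb
  have h2 : Tendsto (fun n => g (u n)) atTop (𝓝 (g L)) := hgc.tendsto.comp hlim
  have h3 : Tendsto (fun n => u (n + 1)) atTop (𝓝 L) := hlim.comp (tendsto_add_atTop_nat 1)
  have h4 : (fun n => g (u n)) = fun n => u (n + 1) :=
    funext fun n => (Function.iterate_succ_apply' g n x).symm
  have hfix : g L = L := tendsto_nhds_unique (h4 ▸ h2) h3
  have hL0' : L = 0 := by
    by_contra h
    have hLpos : 0 < L := lt_of_le_of_ne hL0 (Ne.symm h)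
    exact absurd hfix (ne_of_lt (hg L hLpos hLb).2)
  rw [hL0'] at hlim
  exact hlim

theorem stmt2 (f : ℝ → ℝ) (hf : AnalyticAt ℝ f 0) (h0 : f 0 = 0)
    (h1 : deriv f 0 = -1) (m : ℕ) (hm : 1 ≤ m) (c : ℝ) (hc : c < 0)
    (hexp : (fun x => f (f x) - x - c * x ^ (2 * m + 1)) =O[𝓝 (0 : ℝ)]
      fun x => x ^ (2 * m + 2)) :
    (∀ ε > 0, ∃ δ > 0, ∀ x : ℝ, |x| < δ → ∀ n : ℕ, |f^[n] x| < ε) ∧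
    (∃ δ > 0, ∀ x : ℝ, |x| < δ →
      Filter.Tendsto (fun n => f^[n] x) Filter.atTop (𝓝 (0 : ℝ))) := by
  -- continuity radius
  obtain ⟨r1, hr1, hcf⟩ : ∃ r > 0, ∀ y : ℝ, |y| < r → ContinuousAt f y := by
    have h := hf.eventually_analyticAt
    rw [Metric.eventually_nhds_iff] at h
    obtain ⟨ε, hε, h⟩ := h
    exact ⟨ε, hε, fun y hy => (h (by simpa [Real.dist_eq] using hy)).continuousAt⟩
  -- linear bound near 0
  obtain ⟨r2, hr2, hlin⟩ : ∃ r > 0, ∀ y : ℝ, |y| < r → |f y| ≤ 2 * |y| := by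
    have hd : HasDerivAt f (-1) 0 := h1 ▸ hf.differentiableAt.hasDerivAt
    have h := (hasDerivAt_iff_isLittleO.mp hd).def one_pos
    rw [Metric.eventually_nhds_iff] at h
    obtain ⟨ε, hε, h⟩ := h
    refine ⟨ε, hε, fun y hy => ?_⟩
    have h2 := h (y := y) (by simpa [Real.dist_eq] using hy)
    simp only [h0, sub_zero, smul_eq_mul, mul_neg_one, sub_neg_eq_add, one_mul,
      Real.norm_eq_abs] at h2
    have h3 : |f y| ≤ |f y + y| + |y| := by
      have := abs_add_le (f y + y) (-y)
      simpa using this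
    linarith
  -- big-O bound
  obtain ⟨K, r3, hr3, hbig⟩ : ∃ K r, 0 < r ∧ ∀ y : ℝ, |y| < r →
      |f (f y) - y - c * y ^ (2 * m + 1)| ≤ K * |y| ^ (2 * m + 2) := by
    obtain ⟨K, hK⟩ := hexp.bound
    rw [Metric.eventually_nhds_iff] at hK
    obtain ⟨ε, hε, h⟩ := hK
    refine ⟨K, ε, hε, fun y hy => ?_⟩
    have := h (by simpa [Real.dist_eq] using hy)
    simpa [Real.norm_eq_abs, abs_pow] using this
  -- choose δ
  have hc' : (0:ℝ) < -c := by linarith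
  have hKpos : (0:ℝ) < |K| + 1 := by positivity
  set δ := min (min (r1 / 2) r2) (min r3 (min 1 (min ((-c) / (2 * (|K| + 1))) (1 / (2 * (-c))))))
    with hδdef
  have hδpos : 0 < δ := by
    refine lt_min (lt_min (by linarith) hr2) (lt_min hr3 (lt_min one_pos
      (lt_min (by positivity) (by positivity))))
  have hδa : δ ≤ r1 / 2 := le_trans (min_le_left _ _) (min_le_left _ _)
  have hδb : δ ≤ r2 := le_trans (min_le_left _ _) (min_le_right _ _)
  have hδc : δ ≤ r3 := le_trans (min_le_right _ _) (min_le_left _ _)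
  have hδ1 : δ ≤ 1 :=
    le_trans (min_le_right _ _) (le_trans (min_le_right _ _) (min_le_left _ _))
  have hδK : δ ≤ (-c) / (2 * (|K| + 1)) :=
    le_trans (min_le_right _ _) (le_trans (min_le_right _ _)
      (le_trans (min_le_right _ _) (min_le_left _ _)))
  have hδcc : δ ≤ 1 / (2 * (-c)) :=
    le_trans (min_le_right _ _) (le_trans (min_le_right _ _)
      (le_trans (min_le_right _ _) (min_le_right _ _)))
  have hδ2 : (|K| + 1) * δ ≤ -c / 2 := by
    have h := mul_le_mul_of_nonneg_left hδK hKpos.le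
    have e : (|K| + 1) * ((-c) / (2 * (|K| + 1))) = -c / 2 := by
      field_simp
    linarith [e ▸ h]
  have hδ3 : (-c) * δ ≤ 1 / 2 := by
    have h := mul_le_mul_of_nonneg_left hδcc hc'.le
    have e : (-c) * (1 / (2 * (-c))) = 1 / 2 := by
      have hcne : c ≠ 0 := hc.ne
      field_simp
    linarith [e ▸ h]
  set g : ℝ → ℝ := fun y => f (f y) with hg
  have hg0 : g 0 = 0 := by simp [hg, h0]
  have hestpos : ∀ y, 0 < y → y < δ → |g y - y - c * y ^ (2 * m + 1)| ≤ K * y ^ (2 * m + 2) := by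
    intro y hy hyδ
    have hb := hbig y (by rw [abs_of_pos hy]; exact lt_of_lt_of_le hyδ hδc)
    rwa [abs_of_pos hy] at hb
  have hpos := auxA g c K δ m hc hm hδ1 hδ2 hδ3 hestpos
  set g' : ℝ → ℝ := fun y => -g (-y) with hg'
  have hestneg : ∀ y, 0 < y → y < δ → |g' y - y - c * y ^ (2 * m + 1)| ≤ K * y ^ (2 * m + 2) := by
    intro y hy hyδ
    have hb := hbig (-y) (by rw [abs_neg, abs_of_pos hy]; exact lt_of_lt_of_le hyδ hδc)
    rw [abs_neg, abs_of_pos hy] at hb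
    have hodd : (-y) ^ (2 * m + 1) = -(y ^ (2 * m + 1)) := Odd.neg_pow ⟨m, by ring⟩ y
    have e : g' y - y - c * y ^ (2 * m + 1)
        = -(g (-y) - (-y) - c * (-y) ^ (2 * m + 1)) := by
      show -g (-y) - y - c * y ^ (2 * m + 1) = -(g (-y) - (-y) - c * (-y) ^ (2 * m + 1))
      rw [hodd]; ring
    rw [e, abs_neg]
    exact hb
  have hneg := auxA g' c K δ m hc hm hδ1 hδ2 hδ3 hestneg
  -- |g y| ≤ |y| on (-δ, δ)
  have habs : ∀ y : ℝ, |y| < δ → |g y| ≤ |y| := by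
    intro y hy
    rcases lt_trichotomy y 0 with h | h | h
    · have hya : -y < δ := by rwa [abs_of_neg h] at hy
      have hn := hneg (-y) (by linarith) hya
      have e : g' (-y) = -g y := by simp [hg']
      rw [e] at hn
      rw [abs_of_neg h, abs_of_neg (by linarith : g y < 0)]
      linarith [hn.2]
    · simp [h, hg0]
    · have hp := hpos y h (by rwa [abs_of_pos h] at hy)
      rw [abs_of_pos h, abs_of_pos hp.1]
      exact hp.2.le
  have hiterbound : ∀ x : ℝ, |x| < δ → ∀ k : ℕ, |g^[k] x| ≤ |x| := by
    intro x hx k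
    induction k with
    | zero => simp
    | succ k ih =>
      rw [Function.iterate_succ_apply']
      exact le_trans (habs _ (lt_of_le_of_lt ih hx)) ih
  have hfiter : ∀ k : ℕ, f^[2 * k] = g^[k] := by
    intro k
    rw [Function.iterate_mul]
    congr 1
  -- uniform bound for all iterates
  have hbnd : ∀ x : ℝ, |x| < δ → ∀ n : ℕ, |f^[n] x| ≤ 2 * |x| := by
    intro x hx n
    rcases Nat.even_or_odd n with ⟨k, hk⟩ | ⟨k, hk⟩
    · have hk' : n = 2 * k := by omega
      rw [hk', hfiter k]
      linarith [hiterbound x hx k, abs_nonneg x]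
    · rw [hk, show f^[2 * k + 1] x = f (f^[2 * k] x) from Function.iterate_succ_apply' f (2 * k) x,
        hfiter k]
      have h1 := hiterbound x hx k
      have h2 := hlin (g^[k] x) (lt_of_le_of_lt h1 (lt_of_lt_of_le hx hδb))
      linarith
  constructor
  · intro ε hε
    refine ⟨min δ (ε / 2), lt_min hδpos (by linarith), fun x hx n => ?_⟩
    have hx1 : |x| < δ := lt_of_lt_of_le hx (min_le_left _ _)
    have hx2 : |x| < ε / 2 := lt_of_lt_of_le hx (min_le_right _ _)
    calc |f^[n] x| ≤ 2 * |x| := hbnd x hx1 n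
      _ < ε := by linarith
  · refine ⟨δ, hδpos, fun x hx => ?_⟩
    rcases eq_or_ne x 0 with rfl | hx0
    · have e : (fun n : ℕ => f^[n] (0:ℝ)) = fun _ => (0:ℝ) :=
        funext fun n => Function.iterate_fixed h0 n
      rw [e]; exact tendsto_const_nhds
    · have hgcont : ∀ y, 0 ≤ y → y < δ → ContinuousAt g y := by
        intro y hy0 hyδ
        have hy1 : |y| < r1 := by
          rw [abs_of_nonneg hy0]; linarith
        have hfy : |f y| ≤ 2 * |y| := hlin y (by rw [abs_of_nonneg hy0]; linarith)
        have hfy1 : |f y| < r1 := by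
          rw [abs_of_nonneg hy0] at hfy; linarith
        exact ContinuousAt.comp (hcf (f y) hfy1) (hcf y hy1)
      have hgcont' : ∀ y, 0 ≤ y → y < δ → ContinuousAt g' y := by
        intro y hy0 hyδ
        have hy1 : |(-y)| < r1 := by
          rw [abs_neg, abs_of_nonneg hy0]; linarith
        have hfy : |f (-y)| ≤ 2 * |(-y)| :=
          hlin (-y) (by rw [abs_neg, abs_of_nonneg hy0]; linarith)
        have hfy1 : |f (-y)| < r1 := by
          rw [abs_neg, abs_of_nonneg hy0] at hfy; linarith
        have hgc : ContinuousAt g (-y) := ContinuousAt.comp (hcf (f (-y)) hfy1) (hcf (-y) hy1)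
        exact (hgc.comp continuousAt_neg).neg
      have hgx : Tendsto (fun k => g^[k] x) atTop (𝓝 0) := by
        rcases lt_trichotomy x 0 with h | h | h
        · have hxδ : -x < δ := by rwa [abs_of_neg h] at hx
          have ht := auxB g' δ hgcont' hneg (-x) (by linarith) hxδ
          have heq : ∀ k, g'^[k] (-x) = -(g^[k] x) := by
            intro k
            induction k with
            | zero => simp
            | succ k ih =>
              rw [Function.iterate_succ_apply', Function.iterate_succ_apply', ih]
              simp [hg']
          have ht2 : Tendsto (fun k => -(g'^[k] (-x))) atTop (𝓝 (-0)) := ht.neg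
          simp only [neg_zero] at ht2
          have e : (fun k => -(g'^[k] (-x))) = fun k => g^[k] x := by
            funext k; rw [heq k, neg_neg]
          rwa [e] at ht2
        · exact absurd h hx0
        · exact auxB g δ hgcont hpos x h (by rwa [abs_of_pos h] at hx)
      have hoddt : Tendsto (fun k => f (g^[k] x)) atTop (𝓝 0) := by
        have hc0 : ContinuousAt f 0 := hcf 0 (by simpa using hr1)
        have := hc0.tendsto.comp hgx
        simpa [h0, Function.comp_def] using this
      rw [Metric.tendsto_atTop]
      intro ε hε
      rw [Metric.tendsto_atTop] at hgx hoddt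
      obtain ⟨N1, hN1⟩ := hgx ε hε
      obtain ⟨N2, hN2⟩ := hoddt ε hε
      refine ⟨2 * (N1 + N2) + 2, fun n hn => ?_⟩
      rcases Nat.even_or_odd n with ⟨k, hk⟩ | ⟨k, hk⟩
      · have hk' : n = 2 * k := by omega
        rw [hk', hfiter k]
        exact hN1 k (by omega)
      · rw [hk, show f^[2 * k + 1] x = f (f^[2 * k] x) from Function.iterate_succ_apply' f (2 * k) x,
          hfiter k]
        exact hN2 k (by omega)
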